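/- For all positive reals a, c, the function x ↦ θ(a, x, x) has derivative −a / ((c+a)·√(a² + 2·a·c)) at the point x = c. (This is the derivative formula ∂_c c_c^a computed in the proof of Lemma 2.2 of the paper, where the symbol c occurs both as the central radius and as one neighbor radius and both occurrences are varied simultaneously.) -/

import Mathlib

/-- The tangency angle at the center of a sphere of radius `c` subtended by the
centers of spheres of radii `a` and `b`, all three pairwise tangent. -/
noncomputable def theta (a b c : ℝ) : ℝ :=
  Real.arccos (((c + a) ^ 2 + (c + b) ^ 2 - (a + b) ^ 2) / (2 * (c + a) * (c + b)))

theorem hasDerivAt_theta_center_eq_neighbor (a c : ℝ) (ha : 0 < a) (hc : 0 < c) :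
    HasDerivAt (fun x => theta a x x)
      (-a / ((c + a) * Real.sqrt (a ^ 2 + 2 * a * c))) c := by
  have hca : (0:ℝ) < c + a := by linarith
  -- derivative of x ↦ x/(x+a) at c
  have hinner : HasDerivAt (fun x : ℝ => x / (x + a)) (a / (c + a) ^ 2) c := by
    have h1 : HasDerivAt (fun x : ℝ => x) 1 c := hasDerivAt_id c
    have h2 : HasDerivAt (fun x : ℝ => x + a) 1 c := h1.add_const a
    have := h1.div h2 (by positivity)
    refine this.congr_deriv ?_
    ring
  have hu : c / (c + a) ≠ -1 := by
    have : (0:ℝ) < c / (c + a) := by positivity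
    linarith
  have hu2 : c / (c + a) ≠ 1 := by
    have : c / (c + a) < 1 := (div_lt_one hca).2 (by linarith)
    linarith
  have harccos := (Real.hasDerivAt_arccos hu hu2).comp c hinner
  -- the composed function equals our function near c
  have heq : (fun x => theta a x x) =ᶠ[nhds c] (Real.arccos ∘ fun x : ℝ => x / (x + a)) := by
    filter_upwards [eventually_gt_nhds hc] with x hx
    have hxa : (0:ℝ) < x + a := by linarith
    simp only [theta, Function.comp]
    congr 1
    field_simp
    ring
  have key := harccos.congr_of_eventuallyEq heq
  refine key.congr_deriv ?_
  have h1u : 1 - (c / (c + a)) ^ 2 = (a ^ 2 + 2 * a * c) / (c + a) ^ 2 := by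
    field_simp
    ring
  rw [h1u, Real.sqrt_div (by positivity), Real.sqrt_sq hca.le]
  have hs : (0:ℝ) < Real.sqrt (a ^ 2 + 2 * a * c) := Real.sqrt_pos.2 (by positivity)
  field_simp
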